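/- For the stacked-book graph G_{m,n} = S_m □ P_n with n even: if n ≡ 2 (mod 4) then im(G_{m,n}) ≥ m·⌈n/4⌉ - 1, and if n ≡ 0 (mod 4) then im(G_{m,n}) ≥ mn/4. -/

import Mathlib

open SimpleGraph

/-- The star graph on `m` vertices: vertex `0` is the center, the rest are leaves. -/
def starGraph (m : ℕ) : SimpleGraph (Fin m) :=
  SimpleGraph.fromRel (fun i _ => i.val = 0)

/-- `M` is an induced matching of `G`: every element of `M` is an edge of `G`, and no two
distinct edges of `M` share an endpoint or have endpoints joined by an edge of `G`. -/
def IsInducedMatching {V : Type*} (G : SimpleGraph V) (M : Finset (Sym2 V)) : Prop :=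
  ↑M ⊆ G.edgeSet ∧
    ∀ e₁ ∈ M, ∀ e₂ ∈ M, e₁ ≠ e₂ → ∀ u ∈ e₁, ∀ v ∈ e₂, u ≠ v ∧ ¬G.Adj u v

/-- The maximum induced matching number of `G`. -/
noncomputable def im {V : Type*} (G : SimpleGraph V) : ℕ :=
  sSup {k | ∃ M : Finset (Sym2 V), IsInducedMatching G M ∧ M.card = k}

/-- The stacked-book graph `G_{m,n} = S_m □ P_n`. -/
def stackedBook (m n : ℕ) : SimpleGraph (Fin m × Fin n) :=
  starGraph m □ SimpleGraph.pathGraph n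

lemma card_le_im {V : Type*} [Fintype V] [DecidableEq V] {G : SimpleGraph V}
    {M : Finset (Sym2 V)} (h : IsInducedMatching G M) : M.card ≤ im G := by
  apply le_csSup
  · refine ⟨Fintype.card (Sym2 V), ?_⟩
    rintro k ⟨N, -, rfl⟩
    simpa using N.card_le_univ
  · exact ⟨M, h, rfl⟩

lemma stackedBook_adj {m n : ℕ} {a b : Fin m × Fin n} :
    (stackedBook m n).Adj a b ↔
      ((a.1 ≠ b.1 ∧ (a.1.val = 0 ∨ b.1.val = 0)) ∧ a.2 = b.2) ∨
        (a.1 = b.1 ∧ (a.2.val + 1 = b.2.val ∨ b.2.val + 1 = a.2.val)) := by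
  rw [stackedBook, boxProd_adj, pathGraph_adj, _root_.starGraph, fromRel_adj]
  tauto

/-- Generic construction of an induced matching in the stacked book graph. -/
lemma key (m n K : ℕ) (hn : 0 < n) (P : Fin m × Fin K → Prop) [DecidablePred P]
    (off : Fin m → ℕ)
    (hbound : ∀ p : Fin m × Fin K, P p → off p.1 + 4 * p.2.val + 1 < n)
    (hsep : ∀ i i' : Fin m, i ≠ i' → (i.val = 0 ∨ i'.val = 0) →
      ∀ k k' ε ε' : ℕ, ε ≤ 1 → ε' ≤ 1 → off i + 4 * k + ε ≠ off i' + 4 * k' + ε') :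
    (Finset.univ.filter P).card ≤ im (stackedBook m n) := by
  classical
  set f : Fin m × Fin K → Sym2 (Fin m × Fin n) := fun p =>
    s((p.1, ⟨(off p.1 + 4 * p.2.val) % n, Nat.mod_lt _ hn⟩),
      (p.1, ⟨(off p.1 + 4 * p.2.val + 1) % n, Nat.mod_lt _ hn⟩)) with hf
  set M : Finset (Sym2 (Fin m × Fin n)) := (Finset.univ.filter P).image f with hM
  have hfval : ∀ (p : Fin m × Fin K) (hp : P p),
      f p = s((p.1, ⟨off p.1 + 4 * p.2.val, by have := hbound p hp; omega⟩),
              (p.1, ⟨off p.1 + 4 * p.2.val + 1, by have := hbound p hp; omega⟩)) := by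
    intro p hp
    have h1 := hbound p hp
    simp only [hf]
    simp only [Nat.mod_eq_of_lt h1, Nat.mod_eq_of_lt (show off p.1 + 4 * p.2.val < n by omega)]
  have hmem : ∀ (u : Fin m × Fin n) e, e ∈ M → u ∈ e →
      ∃ p : Fin m × Fin K, P p ∧ e = f p ∧
      u.1 = p.1 ∧ (u.2.val = off p.1 + 4 * p.2.val ∨ u.2.val = off p.1 + 4 * p.2.val + 1) := by
    intro u e he hu
    rw [hM, Finset.mem_image] at he
    obtain ⟨p, hp, rfl⟩ := he
    rw [Finset.mem_filter] at hp
    refine ⟨p, hp.2, rfl, ?_⟩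
    rw [hfval p hp.2, Sym2.mem_iff] at hu
    rcases hu with rfl | rfl <;> simp
  have hgood : ∀ (p p' : Fin m × Fin K), P p → P p' →
      ∀ u v : Fin m × Fin n, u.1 = p.1 →
      (u.2.val = off p.1 + 4 * p.2.val ∨ u.2.val = off p.1 + 4 * p.2.val + 1) →
      v.1 = p'.1 →
      (v.2.val = off p'.1 + 4 * p'.2.val ∨ v.2.val = off p'.1 + 4 * p'.2.val + 1) →
      p ≠ p' → u ≠ v ∧ ¬(stackedBook m n).Adj u v := by
    intro p p' hp hp' u v hu1 hu2 hv1 hv2 hpp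
    by_cases hii : p.1 = p'.1
    · have hkk : p.2.val ≠ p'.2.val := by
        intro h
        exact hpp (Prod.ext hii (Fin.ext h))
      have hoo : off p.1 = off p'.1 := by rw [hii]
      have hlev : u.2.val ≠ v.2.val := by omega
      constructor
      · intro h; rw [h] at hlev; exact hlev rfl
      · rw [stackedBook_adj]
        rintro (⟨⟨hne, -⟩, -⟩ | ⟨-, hpa⟩)
        · exact hne (hu1.trans (hii.trans hv1.symm))
        · omega
    · constructor
      · intro h; apply hii; rw [← hu1, ← hv1, h]
      · rw [stackedBook_adj]
        rintro (⟨⟨-, hz⟩, hlev⟩ | ⟨heq, -⟩)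
        · rw [hu1, hv1] at hz
          have := hsep p.1 p'.1 hii hz p.2.val p'.2.val
            (u.2.val - (off p.1 + 4 * p.2.val)) (v.2.val - (off p'.1 + 4 * p'.2.val))
            (by omega) (by omega)
          have hlv : u.2.val = v.2.val := congrArg Fin.val hlev
          omega
        · exact hii (by rw [← hu1, ← hv1, heq])
  have hIM : IsInducedMatching (stackedBook m n) M := by
    constructor
    · intro e he
      simp only [Finset.mem_coe, hM, Finset.mem_image] at he
      obtain ⟨p, hp, rfl⟩ := he
      rw [Finset.mem_filter] at hp
      rw [hfval p hp.2, SimpleGraph.mem_edgeSet, stackedBook_adj]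
      right
      exact ⟨rfl, Or.inl rfl⟩
    · intro e₁ he₁ e₂ he₂ hne u hu v hv
      obtain ⟨p, hp, rfl, hu1, hu2⟩ := hmem u e₁ he₁ hu
      obtain ⟨p', hp', rfl, hv1, hv2⟩ := hmem v e₂ he₂ hv
      exact hgood p p' hp hp' u v hu1 hu2 hv1 hv2 (fun h => hne (by rw [h]))
  have hinj : Set.InjOn f (Finset.univ.filter P : Finset (Fin m × Fin K)) := by
    intro p hp p' hp' hfeq
    simp only [Finset.coe_filter, Set.mem_setOf_eq] at hp hp'
    have ha : (⟨p.1, ⟨off p.1 + 4 * p.2.val, by have := hbound p hp.2; omega⟩⟩ :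
        Fin m × Fin n) ∈ f p' := by
      rw [← hfeq, hfval p hp.2, Sym2.mem_iff]; left; rfl
    rw [hfval p' hp'.2, Sym2.mem_iff] at ha
    have hoo : p.1 = p'.1 := by
      rcases ha with h | h <;> exact (Prod.ext_iff.mp h).1
    have hval : off p.1 = off p'.1 := by rw [hoo]
    refine Prod.ext hoo (Fin.ext ?_)
    rcases ha with h | h <;>
      · have := congrArg (fun x => (Prod.snd x).val) h
        simp at this
        omega
  calc (Finset.univ.filter P).card = M.card :=
        (Finset.card_image_of_injOn hinj).symm
    _ ≤ im (stackedBook m n) := card_le_im hIM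

theorem im_stackedBook_even_lower (m n : ℕ) (hn : n % 2 = 0) :
    (n % 4 = 2 → m * ((n + 3) / 4) - 1 ≤ im (stackedBook m n)) ∧
    (n % 4 = 0 → m * n / 4 ≤ im (stackedBook m n)) := by
  classical
  constructor
  · intro h4
    rcases Nat.eq_zero_or_pos m with rfl | hm
    · simp
    set q := n / 4 with hq
    have hnq : n = 4 * q + 2 := by omega
    have := key m n (q + 1) (by omega)
      (fun p => p.1.val ≠ 0 ∨ p.2.val < q)
      (fun i => if i.val = 0 then 2 else 0)
      (by
        rintro ⟨i, k⟩ hp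
        have hk := k.isLt
        have hp' : (i : ℕ) ≠ 0 ∨ (k : ℕ) < q := hp
        show (if (i : ℕ) = 0 then 2 else 0) + 4 * (k : ℕ) + 1 < n
        split_ifs with h0 <;> omega)
      (by
        intro i i' hne hz k k' ε ε' hε hε'
        have hvne : i.val ≠ i'.val := fun h => hne (Fin.ext h)
        show (if (i : ℕ) = 0 then 2 else 0) + 4 * k + ε ≠
          (if (i' : ℕ) = 0 then 2 else 0) + 4 * k' + ε'
        split_ifs <;> omega)
    refine le_trans ?_ this
    have hcard : (Finset.univ.filter
        (fun p : Fin m × Fin (q + 1) => p.1.val ≠ 0 ∨ p.2.val < q)).card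
        = m * (q + 1) - 1 := by
      have hcompl : (Finset.univ.filter
          (fun p : Fin m × Fin (q + 1) => ¬(p.1.val ≠ 0 ∨ p.2.val < q))) =
          {(⟨0, hm⟩, ⟨q, by omega⟩)} := by
        ext ⟨i, k⟩
        simp only [Finset.mem_filter, Finset.mem_univ, true_and, Finset.mem_singleton,
          Prod.mk.injEq, not_or, not_not, not_lt]
        constructor
        · rintro ⟨h1, h2⟩
          refine ⟨Fin.ext h1, Fin.ext ?_⟩
          show (k : ℕ) = q
          have := k.isLt
          omega
        · rintro ⟨rfl, rfl⟩
          exact ⟨rfl, le_refl _⟩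
      have := Finset.card_filter_add_card_filter_not
        (s := (Finset.univ : Finset (Fin m × Fin (q + 1))))
        (p := fun p : Fin m × Fin (q + 1) => p.1.val ≠ 0 ∨ p.2.val < q)
      rw [hcompl] at this
      simp only [Finset.card_singleton, Finset.card_univ, Fintype.card_prod,
        Fintype.card_fin] at this
      omega
    rw [hcard]
    have : (n + 3) / 4 = q + 1 := by omega
    rw [this]
  · intro h4
    rcases Nat.eq_zero_or_pos n with rfl | hn0
    · simp
    set q := n / 4 with hq
    have hnq : n = 4 * q := by omega
    have := key m n q (by omega)
      (fun _ => True)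
      (fun i => if i.val = 0 then 0 else 2)
      (by
        rintro ⟨i, k⟩ -
        have hk := k.isLt
        show (if (i : ℕ) = 0 then 0 else 2) + 4 * (k : ℕ) + 1 < n
        split_ifs <;> omega)
      (by
        intro i i' hne hz k k' ε ε' hε hε'
        have hvne : i.val ≠ i'.val := fun h => hne (Fin.ext h)
        show (if (i : ℕ) = 0 then 0 else 2) + 4 * k + ε ≠
          (if (i' : ℕ) = 0 then 0 else 2) + 4 * k' + ε'
        split_ifs <;> omega)
    refine le_trans ?_ this
    rw [Finset.filter_true, Finset.card_univ, Fintype.card_prod, Fintype.card_fin,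
      Fintype.card_fin]
    have hmn : m * n = 4 * (m * q) := by rw [hnq]; ring
    omega
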